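/- Let F be a block filter on E. Then F is a strong (p)-filter if and only if for every ⟨X⟩ ∈ F and every strategy σ for player I in the restricted Gowers game G_F[X], there is an outcome Y of σ with ⟨Y⟩ ∈ F. -/

import Mathlib

namespace BlockPaper

variable {F : Type} [Field F]

/-- `X` is an infinite block sequence in `E = ⊕ₙ F`. -/
def IsBlock (X : ℕ → (ℕ →₀ F)) : Prop :=
  (∀ n, X n ≠ 0) ∧ ∀ n, ∀ i ∈ (X n).support, ∀ j ∈ (X (n + 1)).support, i < j

/-- `⟨X⟩`: the linear span of the entries of `X`, with `0` removed. -/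
def spanSet (X : ℕ → (ℕ →₀ F)) : Set (ℕ →₀ F) :=
  {v | v ≠ 0 ∧ v ∈ Submodule.span F (Set.range X)}

/-- `⟨X/n⟩`: the span (minus `0`) of the entries of `X` whose supports lie entirely above `n`. -/
def tailSpanSet (X : ℕ → (ℕ →₀ F)) (n : ℕ) : Set (ℕ →₀ F) :=
  {v | v ≠ 0 ∧ v ∈ Submodule.span F {x : ℕ →₀ F | (∃ k, X k = x) ∧ ∀ i ∈ x.support, n < i}}

/-- `X ⪯ Y`. -/
def PLE (X Y : ℕ → (ℕ →₀ F)) : Prop := spanSet X ⊆ spanSet Y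

/-- `X ⪯* Y`. -/
def PLEs (X Y : ℕ → (ℕ →₀ F)) : Prop := ∃ n, tailSpanSet X n ⊆ spanSet Y

/-- A block filter on `E`: a proper filter of subsets of `E ∖ {0}` containing all
finite-codimensional subspaces (minus `0`) and with a base of sets `⟨X⟩`, `X ∈ E^[∞]`. -/
structure BlockFilter (F : Type) [Field F] where
  sets : Set (Set (ℕ →₀ F))
  nonzero : ∀ S ∈ sets, ∀ v ∈ S, v ≠ 0
  proper : ∅ ∉ sets
  upward : ∀ S ∈ sets, ∀ T : Set (ℕ →₀ F), (∀ v ∈ T, v ≠ 0) → S ⊆ T → T ∈ sets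
  inter : ∀ S ∈ sets, ∀ T ∈ sets, S ∩ T ∈ sets
  codim : ∀ V : Submodule F (ℕ →₀ F), Module.Finite F ((ℕ →₀ F) ⧸ V) →
    {v : ℕ →₀ F | v ≠ 0 ∧ v ∈ V} ∈ sets
  blockBase : ∀ S ∈ sets, ∃ X : ℕ → (ℕ →₀ F),
    IsBlock X ∧ spanSet X ∈ sets ∧ spanSet X ⊆ S

/-- `D ⊆ E` is `𝓕`-dense. -/
def FDense (𝓕 : BlockFilter F) (D : Set (ℕ →₀ F)) : Prop :=
  ∀ X : ℕ → (ℕ →₀ F), IsBlock X → spanSet X ∈ 𝓕.sets →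
    ∃ V : Submodule F (ℕ →₀ F), ¬ Module.Finite F V ∧
      (V : Set (ℕ →₀ F)) \ {0} ⊆ spanSet X ∩ D

/-- `𝓕` is full: every `𝓕`-dense set belongs to `𝓕`. -/
def Full (𝓕 : BlockFilter F) : Prop :=
  ∀ D : Set (ℕ →₀ F), FDense 𝓕 D → D \ {0} ∈ 𝓕.sets

/-- `𝓕` is a `(p)`-filter. -/
def PFilter (𝓕 : BlockFilter F) : Prop :=
  ∀ Xs : ℕ → ℕ → (ℕ →₀ F), (∀ n, IsBlock (Xs n) ∧ spanSet (Xs n) ∈ 𝓕.sets) →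
    ∃ X : ℕ → (ℕ →₀ F), IsBlock X ∧ spanSet X ∈ 𝓕.sets ∧ ∀ n, PLEs X (Xs n)

/-- `𝓕` is a `(p⁺)`-filter: full and a `(p)`-filter. -/
def PPlus (𝓕 : BlockFilter F) : Prop := Full 𝓕 ∧ PFilter 𝓕

/-- A finite block sequence in `E`, as a list. -/
def IsBlockList (l : List (ℕ →₀ F)) : Prop :=
  (∀ v ∈ l, v ≠ 0) ∧
    l.Chain' (fun u v : ℕ →₀ F => ∀ i ∈ u.support, ∀ j ∈ v.support, i < j)

/-- `𝓕` is a strong `(p)`-filter: any family `(X_x⃗)` indexed by finite block sequences,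
with each `⟨X_x⃗⟩ ∈ 𝓕`, has a diagonalization `X` with `X/x⃗ ⪯ X_x⃗` for all finite initial
segments `x⃗` of `X`. -/
def StrongP (𝓕 : BlockFilter F) : Prop :=
  ∀ Xs : List (ℕ →₀ F) → ℕ → (ℕ →₀ F),
    (∀ l, IsBlockList l → IsBlock (Xs l) ∧ spanSet (Xs l) ∈ 𝓕.sets) →
    ∃ X : ℕ → (ℕ →₀ F), IsBlock X ∧ spanSet X ∈ 𝓕.sets ∧
      ∀ k : ℕ, PLE (fun m => X (m + k)) (Xs (List.ofFn fun i : Fin k => X i))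

/-- The outcome of a strategy (for II) against a sequence of opposing moves:
the `k`-th value is the strategy applied to the first `k+1` opposing moves. -/
def outcomeOf {α β : Type*} (st : List α → β) (Ys : ℕ → α) : ℕ → β :=
  fun k => st (List.ofFn fun i : Fin (k + 1) => Ys i)

/-- A legal move for player I in the Gowers game `G[X]`. -/
def LegalG (X Y : ℕ → (ℕ →₀ F)) : Prop := IsBlock Y ∧ PLE Y X

/-- A legal move for player I in the restricted Gowers game `G_𝓕[X]`. -/
def LegalGF (𝓕 : BlockFilter F) (X Y : ℕ → (ℕ →₀ F)) : Prop :=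
  IsBlock Y ∧ PLE Y X ∧ spanSet Y ∈ 𝓕.sets

/-- `α` is a strategy for player II in a Gowers-type game whose legal moves for I are
given by `legal`: against any sequence of legal I-moves, the outcome is a block
sequence whose `k`-th entry lies in the span of I's `k`-th move. -/
def IsStratII (legal : (ℕ → (ℕ →₀ F)) → Prop)
    (α : List (ℕ → (ℕ →₀ F)) → (ℕ →₀ F)) : Prop :=
  ∀ Ys : ℕ → ℕ → (ℕ →₀ F), (∀ k, legal (Ys k)) →
    IsBlock (outcomeOf α Ys) ∧ ∀ k, outcomeOf α Ys k ∈ spanSet (Ys k)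

/-- `𝓕` is strategic. -/
def Strategic (𝓕 : BlockFilter F) : Prop :=
  ∀ X : ℕ → (ℕ →₀ F), IsBlock X → spanSet X ∈ 𝓕.sets →
    ∀ α, IsStratII (LegalG X) α →
      ∃ Ys : ℕ → ℕ → (ℕ →₀ F), (∀ k, LegalG X (Ys k)) ∧
        spanSet (outcomeOf α Ys) ∈ 𝓕.sets

/-- `𝓕` is `+`-strategic. -/
def PlusStrategic (𝓕 : BlockFilter F) : Prop :=
  ∀ X : ℕ → (ℕ →₀ F), IsBlock X → spanSet X ∈ 𝓕.sets →
    ∀ α, IsStratII (LegalGF 𝓕 X) α →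
      ∃ Ys : ℕ → ℕ → (ℕ →₀ F), (∀ k, LegalGF 𝓕 X (Ys k)) ∧
        spanSet (outcomeOf α Ys) ∈ 𝓕.sets

/-- A legal finite position (list of II's moves so far) in a play where I follows `σ`. -/
def LegalPos (σ : List (ℕ →₀ F) → ℕ → (ℕ →₀ F)) (l : List (ℕ →₀ F)) : Prop :=
  IsBlockList l ∧ ∀ k, (h : k < l.length) → l.get ⟨k, h⟩ ∈ spanSet (σ (l.take k))

/-- `σ` is a strategy for player I in the restricted Gowers game `G_𝓕[X]`. -/
def IsStratIGF (𝓕 : BlockFilter F) (X : ℕ → (ℕ →₀ F))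
    (σ : List (ℕ →₀ F) → ℕ → (ℕ →₀ F)) : Prop :=
  ∀ l, LegalPos σ l → LegalGF 𝓕 X (σ l)

/-- `ys` is (the sequence of II's moves of) an infinite play against I's strategy `σ`
in a Gowers-type game; its outcome is `ys` itself. -/
def PlayAgainstI (σ : List (ℕ →₀ F) → ℕ → (ℕ →₀ F)) (ys : ℕ → (ℕ →₀ F)) : Prop :=
  IsBlock ys ∧ ∀ k, ys k ∈ spanSet (σ (List.ofFn fun i : Fin k => ys i))

/-- `ys` is an infinite play against I's strategy `σ` in the asymptotic game `F[X]`. -/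
def PlayAgainstIAsymp (X : ℕ → (ℕ →₀ F)) (σ : List (ℕ →₀ F) → ℕ)
    (ys : ℕ → (ℕ →₀ F)) : Prop :=
  IsBlock ys ∧ ∀ k, ys k ∈ spanSet X ∧
    ∀ i ∈ (ys k).support, σ (List.ofFn fun j : Fin k => ys j) < i

/-- `FIN`: nonempty finite subsets of `ℕ`. -/
abbrev FIN := {s : Finset ℕ // s.Nonempty}

/-- An infinite block sequence in `FIN`. -/
def IsBlockF (A : ℕ → Finset ℕ) : Prop :=
  (∀ n, (A n).Nonempty) ∧ ∀ n, ∀ i ∈ A n, ∀ j ∈ A (n + 1), i < j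

/-- `⟨A⟩`: unions of finitely many (at least one) entries of `A`. -/
def finUnions (A : ℕ → Finset ℕ) : Set (Finset ℕ) :=
  {b | ∃ G : Finset ℕ, G.Nonempty ∧ b = G.sup A}

/-- `⟨A/n⟩`: unions of finitely many entries of `A` contained in `(n, ∞)`. -/
def finUnionsAbove (A : ℕ → Finset ℕ) (n : ℕ) : Set (Finset ℕ) :=
  {b | ∃ G : Finset ℕ, G.Nonempty ∧ (∀ k ∈ G, ∀ i ∈ A k, n < i) ∧ b = G.sup A}

/-- `A ⪯ B` in `FIN`. -/
def PLEF (A B : ℕ → Finset ℕ) : Prop := finUnions A ⊆ finUnions B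

/-- `A ⪯* B` in `FIN`. -/
def PLEsF (A B : ℕ → Finset ℕ) : Prop := ∃ n, finUnionsAbove A n ⊆ finUnions B

/-- Lift a set of finite subsets of `ℕ` to a set of elements of `FIN`. -/
def liftFIN (S : Set (Finset ℕ)) : Set FIN := {a | (a : Finset ℕ) ∈ S}

/-- `U` is an ordered-union ultrafilter on `FIN`. -/
def OrderedUnion (U : Ultrafilter FIN) : Prop :=
  ∀ S ∈ U, ∃ A : ℕ → Finset ℕ, IsBlockF A ∧
    liftFIN (finUnions A) ∈ U ∧ liftFIN (finUnions A) ⊆ S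

/-- `U` is stable. -/
def Stable (U : Ultrafilter FIN) : Prop :=
  ∀ As : ℕ → ℕ → Finset ℕ, (∀ n, IsBlockF (As n) ∧ liftFIN (finUnions (As n)) ∈ U) →
    ∃ B : ℕ → Finset ℕ, IsBlockF B ∧ liftFIN (finUnions B) ∈ U ∧ ∀ n, PLEsF B (As n)

/-- `supp(X)`: the sequence of supports of the entries of `X`. -/
def suppSeq (X : ℕ → (ℕ →₀ F)) : ℕ → Finset ℕ := fun k => (X k).support

/-- `supp(𝓕)`: the collection of `A ⊆ FIN` containing `{supp v : v ∈ S}` for some `S ∈ 𝓕`. -/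
def suppFilter (𝓕 : BlockFilter F) : Set (Set FIN) :=
  {A | ∃ S ∈ 𝓕.sets, ∀ a : FIN, (∃ v ∈ S, (a : Finset ℕ) = v.support) → a ∈ A}

/-- A finite block sequence in `FIN`, as a list. -/
def IsBlockListF (l : List (Finset ℕ)) : Prop :=
  (∀ a ∈ l, a.Nonempty) ∧
    l.Chain' (fun a b : Finset ℕ => ∀ i ∈ a, ∀ j ∈ b, i < j)

end BlockPaper

namespace BlockPaper

lemma takeOfFn {α : Type*} (g : ℕ → α) {k n : ℕ} (h : k ≤ n) :
    (List.ofFn fun i : Fin n => g i).take k = List.ofFn fun i : Fin k => g i := by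
  apply List.ext_getElem
  · simp [Nat.min_eq_left h]
  · intro i h1 h2
    simp

lemma isBlockList_ofFn {F : Type} [Field F] {X : ℕ → (ℕ →₀ F)} (hX : IsBlock X) (k : ℕ) :
    IsBlockList (List.ofFn fun i : Fin k => X i) := by
  constructor
  · intro v hv
    rw [List.mem_ofFn] at hv
    obtain ⟨i, rfl⟩ := hv
    exact hX.1 i
  · show List.IsChain _ _
    rw [List.isChain_iff_getElem]
    intro i hi
    simp only [List.getElem_ofFn]
    exact hX.2 i

lemma isBlockList_nil {F : Type} [Field F] : IsBlockList ([] : List (ℕ →₀ F)) :=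
  ⟨by simp, List.isChain_nil⟩

lemma foldr_inter_mem {F : Type} [Field F] {𝓕 : Set (Set (ℕ →₀ F))}
    (hinter : ∀ S ∈ 𝓕, ∀ T ∈ 𝓕, S ∩ T ∈ 𝓕)
    (L : List ℕ) (f : ℕ → Set (ℕ →₀ F)) (base : Set (ℕ →₀ F))
    (hb : base ∈ 𝓕) (hf : ∀ k ∈ L, f k ∈ 𝓕) :
    L.foldr (fun k acc => f k ∩ acc) base ∈ 𝓕 := by
  induction L with
  | nil => exact hb
  | cons a L ih =>
    exact hinter _ (hf a (by simp)) _ (ih (fun k hk => hf k (by simp [hk])))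

lemma foldr_inter_subset_base {F : Type} [Field F]
    {L : List ℕ} {f : ℕ → Set (ℕ →₀ F)} {base : Set (ℕ →₀ F)} :
    L.foldr (fun k acc => f k ∩ acc) base ⊆ base := by
  induction L with
  | nil => exact subset_rfl
  | cons a L ih => exact (Set.inter_subset_right).trans ih

lemma foldr_inter_subset {F : Type} [Field F]
    {L : List ℕ} {f : ℕ → Set (ℕ →₀ F)} {base : Set (ℕ →₀ F)}
    {k : ℕ} (hk : k ∈ L) :
    L.foldr (fun k acc => f k ∩ acc) base ⊆ f k := by
  induction L with
  | nil => simp at hk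
  | cons a L ih =>
    rcases List.mem_cons.mp hk with rfl | hk
    · exact Set.inter_subset_left
    · exact Set.inter_subset_right.trans (ih hk)

end BlockPaper

open BlockPaper in
/-- A block filter `𝓕` on `E` is a strong `(p)`-filter iff for every `⟨X⟩ ∈ 𝓕` and every
strategy `σ` for player I in the restricted Gowers game `G_𝓕[X]`, some outcome of `σ`
spans a set in `𝓕`. -/
theorem stmt3 {F : Type} [Field F] [Countable F] (𝓕 : BlockFilter F) :
    StrongP 𝓕 ↔
      ∀ X : ℕ → (ℕ →₀ F), IsBlock X → spanSet X ∈ 𝓕.sets →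
        ∀ σ : List (ℕ →₀ F) → ℕ → (ℕ →₀ F), IsStratIGF 𝓕 X σ →
          ∃ ys : ℕ → (ℕ →₀ F), PlayAgainstI σ ys ∧ spanSet ys ∈ 𝓕.sets := by
  classical
  constructor
  · -- StrongP → strategic property
    intro hSP X hX hXF σ hσ
    obtain ⟨X', hbX', hspX', htail⟩ :=
      hSP (fun l => if LegalPos σ l then σ l else X) (by
        intro l hl
        by_cases h : LegalPos σ l
        · simp only [if_pos h]
          exact ⟨(hσ l h).1, (hσ l h).2.2⟩
        · simp only [if_neg h]
          exact ⟨hX, hXF⟩)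
    have R : ∀ k, LegalPos σ (List.ofFn fun i : Fin k => X' i) ∧
        X' k ∈ spanSet (σ (List.ofFn fun i : Fin k => X' i)) := by
      intro k
      induction k using Nat.strong_induction_on with
      | _ k ih =>
      have hleg : LegalPos σ (List.ofFn fun i : Fin k => X' i) := by
        refine ⟨isBlockList_ofFn hbX' k, ?_⟩
        intro j hj
        have hjk : j < k := by simpa using hj
        rw [List.get_ofFn, takeOfFn X' (le_of_lt hjk)]
        exact (ih j hjk).2
      have hmem : X' k ∈ spanSet (fun m => X' (m + k)) :=
        ⟨hbX'.1 k, Submodule.subset_span ⟨0, by simp⟩⟩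
      have h6 := htail k hmem
      simp only [if_pos hleg] at h6
      exact ⟨hleg, h6⟩
    exact ⟨X', ⟨hbX', fun k => (R k).2⟩, hspX'⟩
  · -- strategic property → StrongP
    intro hgame Xs hXs
    have hnil := hXs [] isBlockList_nil
    have hex : ∀ l : List (ℕ →₀ F), ∃ Y : ℕ → (ℕ →₀ F),
        IsBlock Y ∧ spanSet Y ∈ 𝓕.sets ∧ spanSet Y ⊆ spanSet (Xs []) ∧
        ∀ k, k ≤ l.length → IsBlockList (l.take k) →
          spanSet Y ⊆ spanSet (Xs (l.take k)) := by
      intro l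
      set f : ℕ → Set (ℕ →₀ F) := fun k =>
        if IsBlockList (l.take k) then spanSet (Xs (l.take k)) else spanSet (Xs [])
        with hf
      have hfmem : ∀ k ∈ List.range (l.length + 1), f k ∈ 𝓕.sets := by
        intro k _
        by_cases h : IsBlockList (l.take k)
        · simp only [hf, if_pos h]
          exact (hXs _ h).2
        · simp only [hf, if_neg h]
          exact hnil.2
      have hS := foldr_inter_mem 𝓕.inter (List.range (l.length + 1)) f
        (spanSet (Xs [])) hnil.2 hfmem
      obtain ⟨Y, hY1, hY2, hY3⟩ := 𝓕.blockBase _ hS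
      refine ⟨Y, hY1, hY2, hY3.trans foldr_inter_subset_base, ?_⟩
      intro k hk hbl
      have hsub : (List.range (l.length + 1)).foldr (fun k acc => f k ∩ acc)
          (spanSet (Xs [])) ⊆ f k :=
        foldr_inter_subset (by simp [Nat.lt_succ_of_le hk])
      have hfk : f k = spanSet (Xs (l.take k)) := if_pos hbl
      exact hY3.trans (hsub.trans (le_of_eq hfk))
    choose σ h1 h2 h3 h4 using hex
    obtain ⟨ys, ⟨hbys, hys⟩, hysF⟩ := hgame (Xs []) hnil.1 hnil.2 σ
      (fun l _ => ⟨h1 l, h3 l, h2 l⟩)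
    refine ⟨ys, hbys, hysF, ?_⟩
    intro k v hv
    refine ⟨hv.1, Submodule.span_le.mpr ?_ hv.2⟩
    rintro _ ⟨m, rfl⟩
    have hmem := hys (m + k)
    have hbl : IsBlockList ((List.ofFn fun i : Fin (m + k) => ys i).take k) := by
      rw [takeOfFn ys (Nat.le_add_left k m)]
      exact isBlockList_ofFn hbys k
    have hsub := h4 (List.ofFn fun i : Fin (m + k) => ys i) k
      (by rw [List.length_ofFn]; omega) hbl
    rw [takeOfFn ys (Nat.le_add_left k m)] at hsub
    exact (hsub hmem).2
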